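/- arXiv:1202.1950 — 3 statements merged into one kernel-verified Lean document; each statement's English description precedes it below -/
import Mathlib

section
/- Let f : ℝ⁺ → ℝ⁺ be a nondecreasing function with f(0) = 0 that is regularly varying at infinity with index γ ≥ 0, and let θ be a nonnegative random variable with an absolutely continuous law having finite moments of all positive orders. Define f*(t) := E[f((t − θ)⁺)]. Then f*(t) ∼ f(t) as t → ∞; in particular f* is regularly varying at infinity with index γ. -/
open MeasureTheory Set Filter ProbabilityTheory

/-- If `f : ℝ⁺ → ℝ⁺` is nondecreasing with `f(0) = 0`, regularly varying at `∞` with index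
`γ ≥ 0`, and `θ ≥ 0` is a random variable with an absolutely continuous law and all moments
finite, then `f*(t) := E[f((t - θ)⁺)]` satisfies `f*(t) ∼ f(t)` as `t → ∞`. -/
theorem stmt3 {Ω : Type*} [MeasureSpace Ω] [IsProbabilityMeasure (ℙ : Measure Ω)]
    (f : ℝ → ℝ) (γ : ℝ) (hγ : 0 ≤ γ)
    (hf_mono : MonotoneOn f (Ici 0)) (hf0 : f 0 = 0)
    (hf_nonneg : ∀ x ∈ Ici (0:ℝ), 0 ≤ f x) (hf_meas : Measurable f)
    (hf_rv : ∀ l : ℝ, 0 < l →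
      Tendsto (fun t => f (l * t) / f t) atTop (nhds (l ^ γ)))
    (θ : Ω → ℝ) (hθ_meas : Measurable θ) (hθ_nonneg : ∀ ω, 0 ≤ θ ω)
    (hθ_ac : Measure.map θ (ℙ : Measure Ω) ≪ volume)
    (hθ_mom : ∀ p : ℕ, Integrable (fun ω => θ ω ^ p)) :
    Tendsto (fun t => (∫ ω, f (max (t - θ ω) 0)) / f t) atTop (nhds 1) := by
  -- f is eventually positive
  obtain ⟨t₀, ht₀0, ht₀⟩ : ∃ t₀, 0 ≤ t₀ ∧ 0 < f t₀ := by
    by_contra h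
    push_neg at h
    have hz : ∀ t, 0 ≤ t → f t = 0 := fun t ht => le_antisymm (h t ht) (hf_nonneg t ht)
    have h2 := hf_rv 2 (by norm_num)
    have h0 : Tendsto (fun t => f (2 * t) / f t) atTop (nhds (0:ℝ)) := by
      apply Tendsto.congr' _ tendsto_const_nhds
      filter_upwards [eventually_ge_atTop (0:ℝ)] with t ht
      rw [hz t ht, hz (2*t) (by linarith), div_zero]
    have heq := tendsto_nhds_unique h2 h0
    have hpos : (0:ℝ) < 2 ^ γ := Real.rpow_pos_of_pos (by norm_num) γ
    linarith
  have hfpos : ∀ t, t₀ ≤ t → 0 < f t := fun t ht =>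
    lt_of_lt_of_le ht₀ (hf_mono ht₀0 (le_trans ht₀0 ht) ht)
  have hFmeas : ∀ t : ℝ, Measurable fun ω => f (max (t - θ ω) 0) := fun t =>
    hf_meas.comp ((measurable_const.sub hθ_meas).max measurable_const)
  have hFint : ∀ t : ℝ, 0 ≤ t → Integrable (fun ω => f (max (t - θ ω) 0)) := by
    intro t ht
    refine Integrable.mono' (integrable_const (f t)) (hFmeas t).aestronglyMeasurable
      (ae_of_all _ fun ω => ?_)
    rw [Real.norm_eq_abs, abs_of_nonneg (hf_nonneg _ (mem_Ici.mpr (le_max_right _ _)))]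
    exact hf_mono (mem_Ici.mpr (le_max_right _ _)) (mem_Ici.mpr ht)
      (max_le (by linarith [hθ_nonneg ω]) ht)
  have hub : ∀ t : ℝ, 0 ≤ t → (∫ ω, f (max (t - θ ω) 0)) ≤ f t := by
    intro t ht
    calc (∫ ω, f (max (t - θ ω) 0)) ≤ ∫ _ω : Ω, f t := by
          refine integral_mono (hFint t ht) (integrable_const _) fun ω => ?_
          exact hf_mono (mem_Ici.mpr (le_max_right _ _)) (mem_Ici.mpr ht)
            (max_le (by linarith [hθ_nonneg ω]) ht)
      _ = f t := by simp
  -- choose M with large probability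
  have hMex : ∀ δ : ℝ, 0 < δ → ∃ M, 0 ≤ M ∧ 1 - δ < (ℙ {ω | θ ω ≤ M}).toReal := by
    intro δ hδ
    have hmono : Monotone fun n : ℕ => {ω | θ ω ≤ (n:ℝ)} := by
      intro a b hab ω h
      simp only [mem_setOf_eq] at h ⊢
      exact le_trans h (Nat.cast_le.mpr hab)
    have hU : ⋃ n : ℕ, {ω | θ ω ≤ (n:ℝ)} = univ := by
      ext ω
      simp only [mem_iUnion, mem_setOf_eq, mem_univ, iff_true]
      exact exists_nat_ge _
    have h1 : Tendsto (fun n : ℕ => ℙ {ω | θ ω ≤ (n:ℝ)}) atTop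
        (nhds (ℙ (⋃ n : ℕ, {ω | θ ω ≤ (n:ℝ)}))) := tendsto_measure_iUnion_atTop hmono
    rw [hU, measure_univ] at h1
    have h2 : Tendsto (fun n : ℕ => (ℙ {ω | θ ω ≤ (n:ℝ)}).toReal) atTop (nhds 1) := by
      simpa [Function.comp_def] using (ENNReal.tendsto_toReal (by norm_num)).comp h1
    obtain ⟨n, hn⟩ := (h2.eventually (eventually_gt_nhds (by linarith : 1 - δ < 1))).exists
    exact ⟨n, Nat.cast_nonneg n, hn⟩
  -- choose l close to 1
  have hlex : ∀ δ : ℝ, 0 < δ → ∃ l : ℝ, 0 < l ∧ l < 1 ∧ 1 - δ < l ^ γ := by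
    intro δ hδ
    have hc : ContinuousAt (fun l : ℝ => l ^ γ) 1 :=
      Real.continuousAt_rpow_const 1 γ (Or.inl one_ne_zero)
    have h1 : Tendsto (fun l : ℝ => l ^ γ) (nhdsWithin 1 (Iio 1)) (nhds 1) := by
      have := hc.tendsto
      rw [Real.one_rpow] at this
      exact this.mono_left nhdsWithin_le_nhds
    have h2 : ∀ᶠ l in nhdsWithin (1:ℝ) (Iio 1), 1 - δ < l ^ γ :=
      h1.eventually (eventually_gt_nhds (by linarith))
    have h3 : ∀ᶠ l in nhdsWithin (1:ℝ) (Iio 1), 0 < l :=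
      eventually_nhdsWithin_of_eventually_nhds (eventually_gt_nhds (by norm_num))
    have h4 : ∀ᶠ l in nhdsWithin (1:ℝ) (Iio 1), l < 1 :=
      eventually_mem_nhdsWithin.mono fun l hl => hl
    obtain ⟨l, hl2, hl3, hl4⟩ := (h2.and (h3.and h4)).exists
    exact ⟨l, hl3, hl4, hl2⟩
  rw [Metric.tendsto_nhds]
  intro ε hε
  set δ := min (ε/4) (1/4) with hδdef
  have hδpos : 0 < δ := lt_min (by linarith) (by norm_num)
  have hδ4 : δ ≤ ε/4 := min_le_left _ _
  have hδq : δ ≤ 1/4 := min_le_right _ _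
  obtain ⟨M, hM0, hMP⟩ := hMex δ hδpos
  obtain ⟨l, hl0, hl1, hlγ⟩ := hlex δ hδpos
  set P := (ℙ {ω | θ ω ≤ M}).toReal with hPdef
  have hP0 : 0 ≤ P := ENNReal.toReal_nonneg
  have hE1 : ∀ᶠ t in atTop, 1 - 2*δ < f (l * t) / f t :=
    (hf_rv l hl0).eventually (eventually_gt_nhds (by linarith))
  filter_upwards [hE1, eventually_ge_atTop t₀, eventually_ge_atTop (M / (1 - l)),
    eventually_ge_atTop 0] with t hrat htt₀ htM ht0
  have hft : 0 < f t := hfpos t htt₀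
  have h1l : 0 < 1 - l := by linarith
  have hlt : l * t ≤ t - M := by
    have := (div_le_iff₀ h1l).mp htM
    nlinarith
  have hlt0 : 0 ≤ l * t := mul_nonneg hl0.le ht0
  have hs : MeasurableSet {ω | θ ω ≤ M} := measurableSet_le hθ_meas measurable_const
  have hlow1 : f (l*t) * P ≤ ∫ ω in {ω | θ ω ≤ M}, f (max (t - θ ω) 0) := by
    have hc : ∫ _ω in {ω | θ ω ≤ M}, f (l*t) = f (l*t) * P := by
      rw [setIntegral_const, smul_eq_mul, mul_comm]; rfl
    rw [← hc]
    refine setIntegral_mono_on (integrable_const _).integrableOn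
      ((hFint t ht0).integrableOn) hs fun ω hω => ?_
    refine hf_mono (mem_Ici.mpr hlt0) (mem_Ici.mpr (le_max_right _ _)) ?_
    have hωM : θ ω ≤ M := hω
    calc l * t ≤ t - M := hlt
      _ ≤ t - θ ω := by linarith
      _ ≤ max (t - θ ω) 0 := le_max_left _ _
  have hlow2 : (∫ ω in {ω | θ ω ≤ M}, f (max (t - θ ω) 0)) ≤ ∫ ω, f (max (t - θ ω) 0) :=
    setIntegral_le_integral (hFint t ht0)
      (ae_of_all _ fun ω => hf_nonneg _ (mem_Ici.mpr (le_max_right _ _)))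
  have hflt : (1 - 2*δ) * f t < f (l * t) := (lt_div_iff₀ hft).mp hrat
  have key : (1 - 3*δ) * f t ≤ ∫ ω, f (max (t - θ ω) 0) := by
    have h1 : (1-2*δ) * f t * P ≤ f (l*t) * P := mul_le_mul_of_nonneg_right hflt.le hP0
    have h2 : (1-2*δ) * f t * (1-δ) ≤ (1-2*δ) * f t * P :=
      mul_le_mul_of_nonneg_left hMP.le (by nlinarith)
    nlinarith [mul_nonneg (mul_nonneg hδpos.le hδpos.le) hft.le]
  have hup : (∫ ω, f (max (t - θ ω) 0)) ≤ f t := hub t ht0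
  rw [Real.dist_eq, abs_sub_lt_iff]
  have hd1 : (∫ ω, f (max (t - θ ω) 0)) / f t ≤ 1 := (div_le_one hft).mpr hup
  have hd2 : 1 - 3*δ ≤ (∫ ω, f (max (t - θ ω) 0)) / f t := (le_div_iff₀ hft).mpr key
  constructor <;> linarith
end

section
/- Under the assumptions of the preceding setup (f nondecreasing with f(0)=0, regularly varying at ∞ of index γ ≥ 0; θ ≥ 0 absolutely continuous with all moments finite; f*(t) = E[f((t−θ)⁺)]), one has ∫_{[0,t]} (f(y) − f*(y)) dy ∼ E[θ] · f(t) as t → ∞. -/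
open MeasureTheory Set Filter ProbabilityTheory

/-- Under the same assumptions as in the previous setup (`f` nondecreasing, `f(0)=0`,
regularly varying of index `γ ≥ 0`; `θ ≥ 0` absolutely continuous with all moments finite;
`f*(t) = E[f((t-θ)⁺)]`), one has `∫_{[0,t]} (f(y) - f*(y)) dy ∼ E[θ]·f(t)` as `t → ∞`. -/
theorem stmt4 {Ω : Type*} [MeasureSpace Ω] [IsProbabilityMeasure (ℙ : Measure Ω)]
    (f : ℝ → ℝ) (γ : ℝ) (hγ : 0 ≤ γ)
    (hf_mono : MonotoneOn f (Ici 0)) (hf0 : f 0 = 0)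
    (hf_nonneg : ∀ x ∈ Ici (0:ℝ), 0 ≤ f x) (hf_meas : Measurable f)
    (hf_rv : ∀ l : ℝ, 0 < l →
      Tendsto (fun t => f (l * t) / f t) atTop (nhds (l ^ γ)))
    (θ : Ω → ℝ) (hθ_meas : Measurable θ) (hθ_nonneg : ∀ ω, 0 ≤ θ ω)
    (hθ_ac : Measure.map θ (ℙ : Measure Ω) ≪ volume)
    (hθ_mom : ∀ p : ℕ, Integrable (fun ω => θ ω ^ p)) :
    Tendsto (fun t => (∫ y in Icc (0:ℝ) t, (f y - ∫ ω, f (max (y - θ ω) 0)))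
        / ((∫ ω, θ ω) * f t)) atTop (nhds 1) := by
  -- the monotone extension of f
  set g : ℝ → ℝ := fun u => f (max u 0) with hg_def
  have hg_mono : Monotone g := fun u v h =>
    hf_mono (le_max_right u 0) (le_max_right v 0) (max_le_max h le_rfl)
  have hg0 : g 0 = 0 := by simp [hg_def, hf0]
  have hg_nonneg : ∀ u, 0 ≤ g u := fun u => hf_nonneg _ (le_max_right u 0)
  have hg_eq : ∀ u : ℝ, 0 ≤ u → g u = f u := fun u hu => by
    simp [hg_def, max_eq_left hu]
  have hg_ii : ∀ a b : ℝ, IntervalIntegrable g volume a b := fun a b =>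
    hg_mono.intervalIntegrable
  have hg_meas : Measurable g := hg_mono.measurable
  -- eventual positivity of g
  have hpos : ∀ᶠ t : ℝ in atTop, 0 < g t := by
    have h1 : Tendsto (fun t => f t / f t) atTop (nhds 1) := by
      simpa [Real.one_rpow] using hf_rv 1 one_pos
    filter_upwards [h1.eventually (eventually_gt_nhds (by norm_num : (1:ℝ)/2 < 1)),
      eventually_ge_atTop (0:ℝ)] with t ht ht0
    rw [hg_eq t ht0]
    rcases lt_or_eq_of_le (hf_nonneg t ht0) with h | h
    · exact h
    · rw [← h] at ht; norm_num at ht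
  -- regular variation for g
  have hg_rv : ∀ l : ℝ, 0 < l → Tendsto (fun t => g (l * t) / g t) atTop (nhds (l ^ γ)) := by
    intro l hl
    refine (hf_rv l hl).congr' ?_
    filter_upwards [eventually_ge_atTop (0:ℝ)] with t ht
    rw [hg_eq t ht, hg_eq (l * t) (by positivity)]
  -- the key ratio limit  g(t-s)/g(t) → 1
  have ratio : ∀ s : ℝ, 0 ≤ s → Tendsto (fun t => g (t - s) / g t) atTop (nhds 1) := by
    intro s hs
    rw [Metric.tendsto_nhds]
    intro ε hε
    obtain ⟨l, hlmem, hlγ⟩ : ∃ l : ℝ, l ∈ Ioo (0:ℝ) 1 ∧ 1 - ε/2 < l ^ γ := by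
      have hc : ContinuousAt (fun l : ℝ => l ^ γ) 1 :=
        Real.continuousAt_rpow_const 1 γ (Or.inl one_ne_zero)
      have h1 : Tendsto (fun l : ℝ => l ^ γ) (nhds 1) (nhds 1) := by
        simpa [Real.one_rpow] using hc.tendsto
      have h2 : ∀ᶠ l : ℝ in nhds 1, 1 - ε/2 < l ^ γ :=
        h1.eventually (eventually_gt_nhds (by linarith))
      have hne : (nhdsWithin (1:ℝ) (Ioo 0 1)).NeBot :=
        mem_closure_iff_nhdsWithin_neBot.1 (by
          rw [closure_Ioo (by norm_num : (0:ℝ) ≠ 1)]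
          exact ⟨zero_le_one, le_rfl⟩)
      haveI := hne
      obtain ⟨l, hl1, hl2⟩ :=
        ((eventually_mem_nhdsWithin (a := (1:ℝ)) (s := Ioo (0:ℝ) 1)).and
          (h2.filter_mono (nhdsWithin_le_nhds (a := (1:ℝ)) (s := Ioo (0:ℝ) 1)))).exists
      exact ⟨l, hl1, hl2⟩
    obtain ⟨hl0, hl1⟩ := hlmem
    have hγ1 : l ^ γ ≤ 1 := Real.rpow_le_one hl0.le hl1.le hγ
    have hev : ∀ᶠ t : ℝ in atTop, l ^ γ - ε/2 < g (l * t) / g t :=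
      (hg_rv l hl0).eventually (eventually_gt_nhds (by linarith))
    filter_upwards [hev, hpos, eventually_ge_atTop (s / (1 - l)), eventually_ge_atTop (0:ℝ),
      eventually_ge_atTop s] with t h1 h2 h3 h4 h5
    have hlt : l * t ≤ t - s := by
      have h6 : s ≤ t * (1 - l) := by
        rw [div_le_iff₀ (by linarith : (0:ℝ) < 1 - l)] at h3
        linarith
      nlinarith
    have hle1 : g (l * t) ≤ g (t - s) := hg_mono hlt
    have hle2 : g (t - s) ≤ g t := hg_mono (by linarith)
    have hx1 : g (t - s) / g t ≤ 1 := by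
      rw [div_le_one h2]; exact hle2
    have hx2 : 1 - ε < g (t - s) / g t := by
      have hq : g (l * t) / g t ≤ g (t - s) / g t := (div_le_div_iff_of_pos_right h2).2 hle1
      linarith
    rw [Real.dist_eq, abs_lt]
    constructor <;> linarith
  -- pointwise limit of the normalized inner integral
  have Flim : ∀ s : ℝ, 0 ≤ s →
      Tendsto (fun t => (∫ u in (t - s)..t, g u) / g t) atTop (nhds s) := by
    intro s hs
    have hlow : Tendsto (fun t => s * (g (t - s) / g t)) atTop (nhds s) := by
      have := (ratio s hs).const_mul s
      simpa using this
    apply tendsto_of_tendsto_of_tendsto_of_le_of_le' hlow tendsto_const_nhds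
    · filter_upwards [hpos, eventually_ge_atTop s] with t hgt hts
      have h1 : s * g (t - s) ≤ ∫ u in (t - s)..t, g u := by
        have hc := intervalIntegral.integral_mono_on (μ := volume)
          (by linarith : t - s ≤ t) intervalIntegrable_const (hg_ii (t - s) t)
          (fun u hu => hg_mono hu.1)
        simpa [smul_eq_mul, sub_sub_cancel, mul_comm] using hc
      rw [← mul_div_assoc]
      exact (div_le_div_iff_of_pos_right hgt).2 h1
    · filter_upwards [hpos, eventually_ge_atTop s] with t hgt hts
      have h2 : (∫ u in (t - s)..t, g u) ≤ s * g t := by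
        have hc := intervalIntegral.integral_mono_on (μ := volume)
          (by linarith : t - s ≤ t) (hg_ii (t - s) t) intervalIntegrable_const
          (fun u hu => hg_mono hu.2)
        simpa [smul_eq_mul, sub_sub_cancel, mul_comm] using hc
      calc (∫ u in (t - s)..t, g u) / g t ≤ (s * g t) / g t := (div_le_div_iff_of_pos_right hgt).2 h2
        _ = s := by field_simp
  -- positivity of E[θ]
  have hθint : Integrable θ ℙ := by simpa using hθ_mom 1
  have hEθ : 0 < ∫ ω, θ ω := by
    rcases (integral_nonneg (f := θ) fun ω => hθ_nonneg ω).lt_or_eq with h | h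
    · exact h
    · exfalso
      have h0 : θ =ᶠ[ae ℙ] 0 :=
        (integral_eq_zero_iff_of_nonneg (fun ω => hθ_nonneg ω) hθint).1 h.symm
      have h1 : (ℙ : Measure Ω) (θ ⁻¹' {0}) = 1 := by
        rw [← prob_compl_eq_zero_iff (hθ_meas (measurableSet_singleton 0))]
        have h' := ae_iff.1 h0
        have hset : {a | ¬ θ a = (0 : Ω → ℝ) a} = (θ ⁻¹' {0})ᶜ := by ext ω; simp
        rwa [hset] at h'
      have h2 : Measure.map θ (ℙ : Measure Ω) {0} = 0 := hθ_ac Real.volume_singleton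
      rw [Measure.map_apply hθ_meas (measurableSet_singleton 0), h1] at h2
      norm_num at h2
  -- integrability of ω ↦ g (y - θ ω)
  have hint_y : ∀ y : ℝ, Integrable (fun ω => g (y - θ ω)) ℙ := by
    intro y
    refine Integrable.mono' (integrable_const (g y))
      ((hg_meas.comp (measurable_const.sub hθ_meas)).aestronglyMeasurable) ?_
    refine ae_of_all _ fun ω => ?_
    rw [Real.norm_eq_abs, abs_of_nonneg (hg_nonneg _)]
    exact hg_mono (by linarith [hθ_nonneg ω])
  -- key identity for the numerator
  have key : ∀ t : ℝ, 0 ≤ t →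
      (∫ y in Icc (0:ℝ) t, (f y - ∫ ω, f (max (y - θ ω) 0)))
        = ∫ ω, ∫ u in (t - θ ω)..t, g u := by
    intro t ht
    have e1 : (∫ y in Icc (0:ℝ) t, (f y - ∫ ω, f (max (y - θ ω) 0)))
        = ∫ y in Icc (0:ℝ) t, ∫ ω, (g y - g (y - θ ω)) := by
      refine setIntegral_congr_fun measurableSet_Icc fun y hy => ?_
      have : (fun ω => f (max (y - θ ω) 0)) = fun ω => g (y - θ ω) := rfl
      rw [this, integral_sub (integrable_const _) (hint_y y), integral_const]
      simp [hg_eq y hy.1]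
    have hfin : IsFiniteMeasure (volume.restrict (Icc (0:ℝ) t)) := by
      constructor
      rw [Measure.restrict_apply MeasurableSet.univ, univ_inter, Real.volume_Icc]
      exact ENNReal.ofReal_lt_top
    have e2 : (∫ y in Icc (0:ℝ) t, ∫ ω, (g y - g (y - θ ω)))
        = ∫ ω, ∫ y in Icc (0:ℝ) t, (g y - g (y - θ ω)) := by
      apply MeasureTheory.integral_integral_swap
      have hmeas : AEStronglyMeasurable (Function.uncurry fun (y : ℝ) (ω : Ω) => g y - g (y - θ ω))
          ((volume.restrict (Icc (0:ℝ) t)).prod ℙ) := by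
        apply Measurable.aestronglyMeasurable
        exact (hg_meas.comp measurable_fst).sub
          (hg_meas.comp (measurable_fst.sub (hθ_meas.comp measurable_snd)))
      have hae : ∀ᵐ p : ℝ × Ω ∂((volume.restrict (Icc (0:ℝ) t)).prod ℙ), p.1 ∈ Icc (0:ℝ) t := by
        rw [ae_iff]
        have hset : {p : ℝ × Ω | ¬ p.1 ∈ Icc (0:ℝ) t} = (Icc (0:ℝ) t)ᶜ ×ˢ univ := by
          ext p; simp
        rw [hset, Measure.prod_prod, Measure.restrict_apply measurableSet_Icc.compl,
          compl_inter_self]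
        simp
      refine Integrable.mono' (integrable_const (g t)) hmeas ?_
      filter_upwards [hae] with p hp
      have h1 : g p.1 ≤ g t := hg_mono hp.2
      have h2 : g (p.1 - θ p.2) ≤ g p.1 := hg_mono (by linarith [hθ_nonneg p.2])
      have h3 : 0 ≤ g (p.1 - θ p.2) := hg_nonneg _
      rw [Function.uncurry, Real.norm_eq_abs, abs_le]
      constructor <;> simp <;> linarith
    have e3 : ∀ s : ℝ, 0 ≤ s →
        (∫ y in Icc (0:ℝ) t, (g y - g (y - s))) = ∫ u in (t - s)..t, g u := by
      intro s hs
      rw [integral_Icc_eq_integral_Ioc, ← intervalIntegral.integral_of_le ht]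
      have hsub : IntervalIntegrable (fun y => g (y - s)) volume 0 t := by
        have hm : Monotone fun y : ℝ => y - s := fun a b h => sub_le_sub_right h s
        exact (hg_mono.comp hm).intervalIntegrable
      rw [intervalIntegral.integral_sub (hg_ii 0 t) hsub]
      have h1 : (∫ y in (0:ℝ)..t, g (y - s)) = ∫ u in (0 - s)..(t - s), g u :=
        intervalIntegral.integral_comp_sub_right g s
      have h2 : (∫ u in (0 - s)..(0:ℝ), g u) = 0 := by
        have hcg : EqOn g (fun _ => (0:ℝ)) (uIcc (0 - s) 0) := by
          intro u hu
          rw [uIcc_of_le (by linarith : 0 - s ≤ 0)] at hu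
          simp only [hg_def]
          rw [max_eq_right hu.2, hf0]
        rw [intervalIntegral.integral_congr hcg]
        simp
      have h3 := intervalIntegral.integral_add_adjacent_intervals
        (hg_ii (0 - s) 0) (hg_ii 0 (t - s))
      have h4 := intervalIntegral.integral_add_adjacent_intervals
        (hg_ii 0 (t - s)) (hg_ii (t - s) t)
      rw [h1]
      linarith
    rw [e1, e2]
    exact integral_congr_ae (ae_of_all _ fun ω => e3 (θ ω) (hθ_nonneg ω))
  -- monotonicity in s, for measurability
  have hmono_s : ∀ t : ℝ, Monotone (fun s => ∫ u in (t - s)..t, g u) := by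
    intro t s s' hss'
    have h := intervalIntegral.integral_add_adjacent_intervals
      (hg_ii (t - s') (t - s)) (hg_ii (t - s) t)
    have hnn : 0 ≤ ∫ u in (t - s')..(t - s), g u :=
      intervalIntegral.integral_nonneg (by linarith) (fun u _ => hg_nonneg u)
    simp only []
    linarith
  -- dominated convergence
  have hDCT : Tendsto (fun t => ∫ ω, (∫ u in (t - θ ω)..t, g u) / g t) atTop
      (nhds (∫ ω, θ ω)) := by
    apply MeasureTheory.tendsto_integral_filter_of_dominated_convergence θ
    · refine Eventually.of_forall fun t => ?_
      exact (((hmono_s t).measurable.comp hθ_meas).div_const _).aestronglyMeasurable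
    · filter_upwards [hpos, eventually_ge_atTop (0:ℝ)] with t hgt ht0
      refine ae_of_all _ fun ω => ?_
      have hnn : 0 ≤ ∫ u in (t - θ ω)..t, g u :=
        intervalIntegral.integral_nonneg (by linarith [hθ_nonneg ω]) (fun u _ => hg_nonneg u)
      rw [Real.norm_eq_abs, abs_of_nonneg (div_nonneg hnn hgt.le)]
      have h2 : (∫ u in (t - θ ω)..t, g u) ≤ θ ω * g t := by
        have hc := intervalIntegral.integral_mono_on (μ := volume)
          (by linarith [hθ_nonneg ω] : t - θ ω ≤ t) (hg_ii (t - θ ω) t) intervalIntegrable_const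
          (fun u hu => hg_mono hu.2)
        simpa [smul_eq_mul, sub_sub_cancel, mul_comm] using hc
      calc (∫ u in (t - θ ω)..t, g u) / g t ≤ (θ ω * g t) / g t := (div_le_div_iff_of_pos_right hgt).2 h2
        _ = θ ω := by field_simp
    · exact hθint
    · exact ae_of_all _ fun ω => Flim (θ ω) (hθ_nonneg ω)
  -- conclusion
  have h1 : Tendsto (fun t => (∫ ω, (∫ u in (t - θ ω)..t, g u) / g t) / (∫ ω, θ ω)) atTop
      (nhds 1) := by
    have := hDCT.div_const (∫ ω, θ ω)
    simpa [div_self hEθ.ne'] using this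
  refine h1.congr' ?_
  filter_upwards [hpos, eventually_ge_atTop (0:ℝ)] with t hgt ht0
  rw [key t ht0, MeasureTheory.integral_div, hg_eq t ht0] at *
  rw [div_div, mul_comm (f t) (∫ ω, θ ω)]
end

section
/- Let W be a standard Brownian motion, 0 < v < u, β > 0, and h a nonnegative nondecreasing function on [0,u]. Then E[ ( ∫_{[0,v]}(h(u−y)−h(v−y)) dW(y) + ∫_{[v,u]} h(u−y) dW(y) )⁴ ] = 3 ( ∫_{[0,v]} (h(u−y)−h(v−y))² dy + ∫_{[v,u]} h(u−y)² dy )², and this is at most 3 ( ∫_{[v,u]} h(y)² dy )². -/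
open MeasureTheory Set ProbabilityTheory

open Real
open scoped NNReal ENNReal

lemma aux_even_int (b : ℝ) (hb : 0 < b) (k : ℕ) :
    ∫ x : ℝ, x ^ (2 * k) * rexp (-b * x ^ 2)
      = b ^ (-(2 * (k : ℝ) + 1) / 2) * Real.Gamma ((2 * (k : ℝ) + 1) / 2) := by
  have h1 : (∫ x : ℝ, x ^ (2 * k) * rexp (-b * x ^ 2))
      = ∫ x : ℝ, (fun t : ℝ => t ^ (2 * k) * rexp (-b * t ^ 2)) |x| := by
    congr 1 with x
    simp [pow_mul, sq_abs]
  rw [h1, integral_comp_abs (f := fun t : ℝ => t ^ (2 * k) * rexp (-b * t ^ 2))]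
  have h2 : ∫ x in Ioi (0:ℝ), x ^ (2*k) * rexp (-b * x^2)
      = ∫ x in Ioi (0:ℝ), x ^ (2*(k:ℝ)) * rexp (-b * x ^ (2:ℝ)) := by
    refine setIntegral_congr_fun measurableSet_Ioi (fun x hx => ?_)
    rw [← Real.rpow_natCast x (2*k), ← Real.rpow_natCast x 2]
    push_cast
    norm_num
  rw [h2, integral_rpow_mul_exp_neg_mul_rpow (by norm_num)
    (by have := Nat.cast_nonneg (α := ℝ) k; linarith) hb]
  ring

lemma gamma_3half : Real.Gamma (3/2) = √π / 2 := by
  rw [show (3/2:ℝ) = 1/2 + 1 by norm_num, Real.Gamma_add_one (by norm_num),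
    Real.Gamma_one_half_eq]; ring

lemma gamma_5half : Real.Gamma (5/2) = 3/4 * √π := by
  rw [show (5/2:ℝ) = 3/2 + 1 by norm_num, Real.Gamma_add_one (by norm_num), gamma_3half]; ring

lemma aux_odd_int (f : ℝ → ℝ) (hf : ∀ x, f (-x) = - f x) : ∫ x : ℝ, f x = 0 := by
  have h1 := MeasureTheory.integral_neg_eq_self f (volume : Measure ℝ)
  have h2 : ∫ x : ℝ, f (-x) = - ∫ x : ℝ, f x := by
    simp_rw [hf]; exact integral_neg f
  linarith [h1.symm.trans h2]

lemma pdf_eq (v : ℝ≥0) (x : ℝ) :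
    gaussianPDFReal 0 v x = (√(2*π*(v:ℝ)))⁻¹ * rexp (-(2*(v:ℝ))⁻¹ * x^2) := by
  unfold gaussianPDFReal
  rw [sub_zero]
  ring_nf

lemma gauss_int (v : ℝ≥0) (hv : v ≠ 0) (g : ℝ → ℝ) :
    ∫ x, g x ∂(gaussianReal 0 v) = ∫ x : ℝ, gaussianPDFReal 0 v x * g x := by
  rw [gaussianReal_of_var_ne_zero _ hv]
  have he : gaussianPDF 0 v = fun x => ((gaussianPDFReal 0 v x).toNNReal : ℝ≥0∞) := rfl
  rw [he, integral_withDensity_eq_integral_smul (measurable_gaussianPDFReal 0 v).real_toNNReal g]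
  congr 1 with x
  rw [NNReal.smul_def, Real.coe_toNNReal _ (gaussianPDFReal_nonneg 0 v x), smul_eq_mul]

lemma gauss_pow_integrable (v : ℝ≥0) (n : ℕ) :
    Integrable (fun x : ℝ => x ^ n) (gaussianReal 0 v) := by
  rcases eq_or_ne v 0 with rfl | hv
  · rw [gaussianReal_zero_var]
    exact (integrable_const ((0:ℝ)^n)).congr ((ae_eq_dirac' (measurable_id.pow_const n)).symm)
  · have hvpos : (0:ℝ) < v := lt_of_le_of_ne v.coe_nonneg (by exact_mod_cast hv.symm)
    rw [gaussianReal_of_var_ne_zero _ hv]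
    have he : gaussianPDF 0 v = fun x => ((gaussianPDFReal 0 v x).toNNReal : ℝ≥0∞) := rfl
    rw [he, integrable_withDensity_iff_integrable_smul
      (measurable_gaussianPDFReal 0 v).real_toNNReal]
    have hb : (0:ℝ) < (2*(v:ℝ))⁻¹ := by positivity
    have hint := (integrable_rpow_mul_exp_neg_mul_sq hb
      (s := (n:ℝ)) (by have := Nat.cast_nonneg (α := ℝ) n; linarith)).const_mul
      ((√(2*π*(v:ℝ)))⁻¹)
    refine hint.congr (Filter.Eventually.of_forall fun x => ?_)
    simp only [NNReal.smul_def, smul_eq_mul]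
    rw [Real.coe_toNNReal _ (gaussianPDFReal_nonneg 0 v x), pdf_eq, Real.rpow_natCast]
    ring

lemma gauss_odd (v : ℝ≥0) (n : ℕ) (hn : Odd n) :
    ∫ x, x ^ n ∂(gaussianReal 0 v) = 0 := by
  rcases eq_or_ne v 0 with rfl | hv
  · rw [gaussianReal_zero_var, integral_dirac]
    exact zero_pow hn.pos.ne'
  · rw [gauss_int v hv]
    refine aux_odd_int _ (fun x => ?_)
    simp only [pdf_eq, neg_sq, hn.neg_pow]
    ring

lemma rpow_expand (t : ℝ) (ht : 0 < t) (y : ℝ) :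
    (t⁻¹ : ℝ) ^ (-y : ℝ) = t ^ (y : ℝ) := by
  rw [Real.inv_rpow ht.le, Real.rpow_neg ht.le, inv_inv]

lemma gauss_two (v : ℝ≥0) : ∫ x, x ^ 2 ∂(gaussianReal 0 v) = v := by
  rcases eq_or_ne v 0 with rfl | hv
  · rw [gaussianReal_zero_var, integral_dirac]; norm_num
  · have hvpos : (0:ℝ) < v := lt_of_le_of_ne v.coe_nonneg (by exact_mod_cast hv.symm)
    set t : ℝ := 2 * (v:ℝ) with htdef
    have ht : (0:ℝ) < t := by positivity
    have hb : (0:ℝ) < t⁻¹ := by positivity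
    rw [gauss_int v hv]
    have h1 : (∫ x : ℝ, gaussianPDFReal 0 v x * x ^ 2)
        = (√(2*π*(v:ℝ)))⁻¹ * ∫ x : ℝ, x ^ (2*1) * rexp (-t⁻¹ * x ^ 2) := by
      rw [← integral_const_mul]
      congr 1 with x
      rw [pdf_eq]
      simp only [htdef]
      ring_nf
    rw [h1, aux_even_int _ hb 1]
    push_cast
    rw [show (-(2 * (1:ℝ) + 1) / 2) = -(3/2 : ℝ) by norm_num, rpow_expand t ht,
      show ((2:ℝ) * 1 + 1) / 2 = 3/2 by norm_num, gamma_3half]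
    have h3 : t ^ ((3:ℝ)/2) = t * √t := by
      rw [show (3:ℝ)/2 = 1 + 1/2 by norm_num, Real.rpow_add ht, Real.rpow_one,
        ← Real.sqrt_eq_rpow]
    have h4 : √(2*π*(v:ℝ)) = √π * √t := by
      rw [show 2*π*(v:ℝ) = π * t by rw [htdef]; ring, Real.sqrt_mul Real.pi_pos.le]
    rw [h3, h4]
    have hsp : (0:ℝ) < √π := Real.sqrt_pos.2 Real.pi_pos
    have hst : (0:ℝ) < √t := Real.sqrt_pos.2 ht
    have h5 : √t * √t = t := Real.mul_self_sqrt ht.le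
    field_simp
    rw [htdef]

lemma gauss_four (v : ℝ≥0) : ∫ x, x ^ 4 ∂(gaussianReal 0 v) = 3 * (v:ℝ) ^ 2 := by
  rcases eq_or_ne v 0 with rfl | hv
  · rw [gaussianReal_zero_var, integral_dirac]; norm_num
  · have hvpos : (0:ℝ) < v := lt_of_le_of_ne v.coe_nonneg (by exact_mod_cast hv.symm)
    set t : ℝ := 2 * (v:ℝ) with htdef
    have ht : (0:ℝ) < t := by positivity
    have hb : (0:ℝ) < t⁻¹ := by positivity
    rw [gauss_int v hv]
    have h1 : (∫ x : ℝ, gaussianPDFReal 0 v x * x ^ 4)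
        = (√(2*π*(v:ℝ)))⁻¹ * ∫ x : ℝ, x ^ (2*2) * rexp (-t⁻¹ * x ^ 2) := by
      rw [← integral_const_mul]
      congr 1 with x
      rw [pdf_eq]
      simp only [htdef]
      ring_nf
    rw [h1, aux_even_int _ hb 2]
    push_cast
    rw [show (-(2 * (2:ℝ) + 1) / 2) = -(5/2 : ℝ) by norm_num, rpow_expand t ht,
      show ((2:ℝ) * 2 + 1) / 2 = 5/2 by norm_num, gamma_5half]
    have h3 : t ^ ((5:ℝ)/2) = t ^ 2 * √t := by
      rw [show (5:ℝ)/2 = 2 + 1/2 by norm_num, Real.rpow_add ht, ← Real.sqrt_eq_rpow]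
      norm_num [Real.rpow_two]
    have h4 : √(2*π*(v:ℝ)) = √π * √t := by
      rw [show 2*π*(v:ℝ) = π * t by rw [htdef]; ring, Real.sqrt_mul Real.pi_pos.le]
    rw [h3, h4]
    have hsp : (0:ℝ) < √π := Real.sqrt_pos.2 Real.pi_pos
    have hst : (0:ℝ) < √t := Real.sqrt_pos.2 ht
    have h5 : √t * √t = t := Real.mul_self_sqrt ht.le
    field_simp
    rw [htdef]; ring

lemma intOn {a b M : ℝ} {g : ℝ → ℝ} (hg : Measurable g) (hM : ∀ y ∈ Icc a b, |g y| ≤ M) :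
    IntegrableOn g (Icc a b) := by
  refine Integrable.mono' (g := fun _ => M) ?_ hg.aestronglyMeasurable ?_
  · exact integrableOn_const measure_Icc_lt_top.ne
  · exact (ae_restrict_mem measurableSet_Icc).mono fun y hy => by simpa using hM y hy

lemma refl_int (c : ℝ) (hc : 0 ≤ c) (g : ℝ → ℝ) :
    ∫ y in Icc (0:ℝ) c, g (c - y) = ∫ y in Icc (0:ℝ) c, g y := by
  rw [integral_Icc_eq_integral_Ioc, integral_Icc_eq_integral_Ioc,
    ← intervalIntegral.integral_of_le hc, ← intervalIntegral.integral_of_le hc,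
    intervalIntegral.integral_comp_sub_left g c, sub_self, sub_zero]

lemma split_int (a c d : ℝ) (hac : a ≤ c) (hcd : c ≤ d) {g : ℝ → ℝ}
    (h1 : IntegrableOn g (Icc a c)) (h2 : IntegrableOn g (Icc c d)) :
    ∫ y in Icc a d, g y = (∫ y in Icc a c, g y) + ∫ y in Icc c d, g y := by
  rw [integral_Icc_eq_integral_Ioc, integral_Icc_eq_integral_Ioc, integral_Icc_eq_integral_Ioc,
    ← setIntegral_union (Ioc_disjoint_Ioc_of_le le_rfl) measurableSet_Ioc
      (h1.mono_set Ioc_subset_Icc_self) (h2.mono_set Ioc_subset_Icc_self),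
    Ioc_union_Ioc_eq_Ioc hac hcd]

lemma part2 (u v : ℝ) (hv : 0 < v) (hvu : v < u) (h : ℝ → ℝ) (h0 : ∀ x, 0 ≤ h x)
    (hm : Monotone h) :
    (∫ y in Icc (0:ℝ) v, (h (u - y) - h (v - y)) ^ 2) + ∫ y in Icc v u, (h (u - y)) ^ 2
      ≤ ∫ y in Icc v u, h y ^ 2 := by
  have hmeas : Measurable h := hm.measurable
  have habs : ∀ s : ℝ, s ≤ u → |h s ^ 2| ≤ h u ^ 2 := fun s hs => by
    rw [abs_of_nonneg (sq_nonneg _)]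
    exact pow_le_pow_left₀ (h0 s) (hm hs) 2
  -- integrability
  have m2 : Measurable fun y => h (u - y) ^ 2 :=
    ((hmeas.comp (measurable_const.sub measurable_id)).pow_const 2)
  have m3 : Measurable fun y => h (v - y) ^ 2 :=
    ((hmeas.comp (measurable_const.sub measurable_id)).pow_const 2)
  have m4 : Measurable fun y => h y ^ 2 := hmeas.pow_const 2
  have m1 : Measurable fun y => (h (u - y) - h (v - y)) ^ 2 :=
    (((hmeas.comp (measurable_const.sub measurable_id)).sub
      (hmeas.comp (measurable_const.sub measurable_id))).pow_const 2)
  have i2v : IntegrableOn (fun y => h (u - y) ^ 2) (Icc (0:ℝ) v) :=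
    intOn m2 fun y hy => habs _ (by linarith [hy.1])
  have i2vu : IntegrableOn (fun y => h (u - y) ^ 2) (Icc v u) :=
    intOn m2 fun y hy => habs _ (by linarith [hy.1, hv])
  have i3 : IntegrableOn (fun y => h (v - y) ^ 2) (Icc (0:ℝ) v) :=
    intOn m3 fun y hy => habs _ (by linarith [hy.1])
  have i4v : IntegrableOn (fun y => h y ^ 2) (Icc (0:ℝ) v) :=
    intOn m4 fun y hy => habs _ (by linarith [hy.2])
  have i4vu : IntegrableOn (fun y => h y ^ 2) (Icc v u) :=
    intOn m4 fun y hy => habs _ hy.2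
  have i1 : IntegrableOn (fun y => (h (u - y) - h (v - y)) ^ 2) (Icc (0:ℝ) v) := by
    refine intOn (M := h u ^ 2) m1 fun y hy => ?_
    have h1 : h (v - y) ≤ h (u - y) := hm (by linarith)
    have h2 : 0 ≤ h (v - y) := h0 _
    have h3 : h (u - y) ≤ h u := hm (by linarith [hy.1])
    rw [abs_of_nonneg (sq_nonneg _)]
    nlinarith
  -- step 1 : pointwise inequality
  have step1 : (∫ y in Icc (0:ℝ) v, (h (u - y) - h (v - y)) ^ 2)
      ≤ ∫ y in Icc (0:ℝ) v, (h (u - y) ^ 2 - h (v - y) ^ 2) := by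
    refine setIntegral_mono_on i1 (i2v.sub i3) measurableSet_Icc fun y hy => ?_
    have h1 : h (v - y) ≤ h (u - y) := hm (by linarith)
    have h2 : 0 ≤ h (v - y) := h0 _
    nlinarith
  have step2 : (∫ y in Icc (0:ℝ) v, (h (u - y) ^ 2 - h (v - y) ^ 2))
      = (∫ y in Icc (0:ℝ) v, h (u - y) ^ 2) - ∫ y in Icc (0:ℝ) v, h (v - y) ^ 2 :=
    integral_sub i2v i3
  have step3 : (∫ y in Icc (0:ℝ) v, h (v - y) ^ 2) = ∫ y in Icc (0:ℝ) v, h y ^ 2 :=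
    refl_int v hv.le (fun y => h y ^ 2)
  have step4 : (∫ y in Icc (0:ℝ) u, h (u - y) ^ 2)
      = (∫ y in Icc (0:ℝ) v, h (u - y) ^ 2) + ∫ y in Icc v u, h (u - y) ^ 2 :=
    split_int 0 v u hv.le hvu.le i2v i2vu
  have step5 : (∫ y in Icc (0:ℝ) u, h (u - y) ^ 2) = ∫ y in Icc (0:ℝ) u, h y ^ 2 :=
    refl_int u (by linarith) (fun y => h y ^ 2)
  have step6 : (∫ y in Icc (0:ℝ) u, h y ^ 2)
      = (∫ y in Icc (0:ℝ) v, h y ^ 2) + ∫ y in Icc v u, h y ^ 2 :=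
    split_int 0 v u hv.le hvu.le i4v i4vu
  linarith


/-- For `0 < v < u` and `h` nonnegative nondecreasing, the fourth moment of the sum of the
two independent Wiener integrals `∫_{[0,v]}(h(u-y)-h(v-y)) dW(y)` and `∫_{[v,u]} h(u-y) dW(y)`
equals `3 (∫_{[0,v]} (h(u-y)-h(v-y))² dy + ∫_{[v,u]} h(u-y)² dy)²`, which is at most
`3 (∫_{[v,u]} h(y)² dy)²`. -/
theorem stmt10 {Ω : Type*} [MeasureSpace Ω] [IsProbabilityMeasure (ℙ : Measure Ω)]
    (u v β : ℝ) (hv : 0 < v) (hvu : v < u) (hβ : 0 < β)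
    (h : ℝ → ℝ) (h_nonneg : ∀ x, 0 ≤ h x) (h_mono : Monotone h)
    (G₁ G₂ : Ω → ℝ)
    (hindep : IndepFun G₁ G₂ ℙ)
    (hG₁ : Measure.map G₁ ℙ = gaussianReal 0
      (Real.toNNReal (∫ y in Icc (0:ℝ) v, (h (u - y) - h (v - y)) ^ 2)))
    (hG₂ : Measure.map G₂ ℙ = gaussianReal 0
      (Real.toNNReal (∫ y in Icc v u, (h (u - y)) ^ 2))) :
    (∫ ω, (G₁ ω + G₂ ω) ^ 4)
      = 3 * ((∫ y in Icc (0:ℝ) v, (h (u - y) - h (v - y)) ^ 2)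
          + ∫ y in Icc v u, (h (u - y)) ^ 2) ^ 2
    ∧ (∫ ω, (G₁ ω + G₂ ω) ^ 4) ≤ 3 * (∫ y in Icc v u, (h y) ^ 2) ^ 2 := by
  set A := ∫ y in Icc (0:ℝ) v, (h (u - y) - h (v - y)) ^ 2 with hAdef
  set B := ∫ y in Icc v u, (h (u - y)) ^ 2 with hBdef
  set C := ∫ y in Icc v u, (h y) ^ 2 with hCdef
  have hA0 : 0 ≤ A := setIntegral_nonneg measurableSet_Icc fun y _ => sq_nonneg _
  have hB0 : 0 ≤ B := setIntegral_nonneg measurableSet_Icc fun y _ => sq_nonneg _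
  have hC0 : 0 ≤ C := setIntegral_nonneg measurableSet_Icc fun y _ => sq_nonneg _
  have hmX : AEMeasurable G₁ ℙ := aemeasurable_of_map_neZero (by rw [hG₁]; infer_instance)
  have hmY : AEMeasurable G₂ ℙ := aemeasurable_of_map_neZero (by rw [hG₂]; infer_instance)
  have hintX : ∀ n : ℕ, Integrable (fun ω => G₁ ω ^ n) ℙ := fun n => by
    have h1 := gauss_pow_integrable (Real.toNNReal A) n
    rw [← hG₁] at h1
    exact h1.comp_aemeasurable hmX
  have hintY : ∀ n : ℕ, Integrable (fun ω => G₂ ω ^ n) ℙ := fun n => by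
    have h1 := gauss_pow_integrable (Real.toNNReal B) n
    rw [← hG₂] at h1
    exact h1.comp_aemeasurable hmY
  have hmomX : ∀ n : ℕ, (∫ ω, G₁ ω ^ n) = ∫ x, x ^ n ∂(gaussianReal 0 (Real.toNNReal A)) := by
    intro n
    rw [← hG₁, integral_map hmX (measurable_id'.pow_const n).aestronglyMeasurable]
  have hmomY : ∀ n : ℕ, (∫ ω, G₂ ω ^ n) = ∫ x, x ^ n ∂(gaussianReal 0 (Real.toNNReal B)) := by
    intro n
    rw [← hG₂, integral_map hmY (measurable_id'.pow_const n).aestronglyMeasurable]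
  have X1 : (∫ ω, G₁ ω ^ 1) = 0 := by rw [hmomX 1, gauss_odd _ 1 odd_one]
  have Y1 : (∫ ω, G₂ ω ^ 1) = 0 := by rw [hmomY 1, gauss_odd _ 1 odd_one]
  have X3 : (∫ ω, G₁ ω ^ 3) = 0 := by rw [hmomX 3, gauss_odd _ 3 ⟨1, by norm_num⟩]
  have Y3 : (∫ ω, G₂ ω ^ 3) = 0 := by rw [hmomY 3, gauss_odd _ 3 ⟨1, by norm_num⟩]
  have X2 : (∫ ω, G₁ ω ^ 2) = A := by
    rw [hmomX 2, gauss_two, Real.coe_toNNReal _ hA0]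
  have Y2 : (∫ ω, G₂ ω ^ 2) = B := by
    rw [hmomY 2, gauss_two, Real.coe_toNNReal _ hB0]
  have X4 : (∫ ω, G₁ ω ^ 4) = 3 * A ^ 2 := by
    rw [hmomX 4, gauss_four, Real.coe_toNNReal _ hA0]
  have Y4 : (∫ ω, G₂ ω ^ 4) = 3 * B ^ 2 := by
    rw [hmomY 4, gauss_four, Real.coe_toNNReal _ hB0]
  have hintMul : ∀ i j : ℕ, Integrable (fun ω => G₁ ω ^ i * G₂ ω ^ j) ℙ := fun i j => by
    have h1 := (hindep.comp (measurable_id.pow_const i)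
      (measurable_id.pow_const j)).integrable_mul (hintX i) (hintY j)
    exact h1
  have hip : ∀ i j : ℕ, (∫ ω, G₁ ω ^ i * G₂ ω ^ j)
      = (∫ ω, G₁ ω ^ i) * ∫ ω, G₂ ω ^ j := fun i j => by
    have h1 := (hindep.comp (measurable_id.pow_const i)
      (measurable_id.pow_const j)).integral_mul_eq_mul_integral (hintX i).aestronglyMeasurable
        (hintY j).aestronglyMeasurable
    simpa [Pi.mul_apply, Function.comp_def] using h1
  have j4 : Integrable (fun ω => 4 * (G₁ ω ^ 1 * G₂ ω ^ 3) + G₂ ω ^ 4) ℙ :=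
    ((hintMul 1 3).const_mul 4).add (hintY 4)
  have j3 : Integrable (fun ω => 6 * (G₁ ω ^ 2 * G₂ ω ^ 2)
      + (4 * (G₁ ω ^ 1 * G₂ ω ^ 3) + G₂ ω ^ 4)) ℙ := ((hintMul 2 2).const_mul 6).add j4
  have j2 : Integrable (fun ω => 4 * (G₁ ω ^ 3 * G₂ ω ^ 1) + (6 * (G₁ ω ^ 2 * G₂ ω ^ 2)
      + (4 * (G₁ ω ^ 1 * G₂ ω ^ 3) + G₂ ω ^ 4))) ℙ := ((hintMul 3 1).const_mul 4).add j3
  have e4 : (∫ ω, (4 * (G₁ ω ^ 1 * G₂ ω ^ 3) + G₂ ω ^ 4))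
      = 4 * (∫ ω, G₁ ω ^ 1 * G₂ ω ^ 3) + ∫ ω, G₂ ω ^ 4 := by
    rw [integral_add ((hintMul 1 3).const_mul 4) (hintY 4), integral_const_mul]
  have e3 : (∫ ω, (6 * (G₁ ω ^ 2 * G₂ ω ^ 2) + (4 * (G₁ ω ^ 1 * G₂ ω ^ 3) + G₂ ω ^ 4)))
      = 6 * (∫ ω, G₁ ω ^ 2 * G₂ ω ^ 2)
        + (4 * (∫ ω, G₁ ω ^ 1 * G₂ ω ^ 3) + ∫ ω, G₂ ω ^ 4) := by
    rw [integral_add ((hintMul 2 2).const_mul 6) j4, integral_const_mul, e4]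
  have e2 : (∫ ω, (4 * (G₁ ω ^ 3 * G₂ ω ^ 1) + (6 * (G₁ ω ^ 2 * G₂ ω ^ 2)
        + (4 * (G₁ ω ^ 1 * G₂ ω ^ 3) + G₂ ω ^ 4))))
      = 4 * (∫ ω, G₁ ω ^ 3 * G₂ ω ^ 1) + (6 * (∫ ω, G₁ ω ^ 2 * G₂ ω ^ 2)
        + (4 * (∫ ω, G₁ ω ^ 1 * G₂ ω ^ 3) + ∫ ω, G₂ ω ^ 4)) := by
    rw [integral_add ((hintMul 3 1).const_mul 4) j3, integral_const_mul, e3]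
  have E : (∫ ω, (G₁ ω + G₂ ω) ^ 4)
      = (∫ ω, G₁ ω ^ 4) + (4 * (∫ ω, G₁ ω ^ 3 * G₂ ω ^ 1) + (6 * (∫ ω, G₁ ω ^ 2 * G₂ ω ^ 2)
        + (4 * (∫ ω, G₁ ω ^ 1 * G₂ ω ^ 3) + ∫ ω, G₂ ω ^ 4))) := by
    rw [show (fun ω => (G₁ ω + G₂ ω) ^ 4)
        = fun ω => G₁ ω ^ 4 + (4 * (G₁ ω ^ 3 * G₂ ω ^ 1) + (6 * (G₁ ω ^ 2 * G₂ ω ^ 2)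
          + (4 * (G₁ ω ^ 1 * G₂ ω ^ 3) + G₂ ω ^ 4))) from funext fun ω => by ring]
    rw [integral_add (hintX 4) j2, e2]
  have val : (∫ ω, (G₁ ω + G₂ ω) ^ 4) = 3 * (A + B) ^ 2 := by
    rw [E, hip 3 1, hip 2 2, hip 1 3, X4, Y4, X2, Y2, X1, Y1, X3, Y3]
    ring
  refine ⟨val, ?_⟩
  rw [val]
  have hle : A + B ≤ C := part2 u v hv hvu h h_nonneg h_mono
  nlinarith [pow_le_pow_left₀ (add_nonneg hA0 hB0) hle 2]
end
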